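/- For every d ≥ 1 and k with 0 ≤ k ≤ d, the set C_{d,d} restricted appropriately is in bijection with the set of pairs (σ, m) where σ is a permutation of {1,…,d+1} and m is either 'none' or an element i ≤ k fixed by σ; equivalently, both sets have cardinality (d+k+1)·d!. -/

import Mathlib

open Nat

/-- `x` lies in a cycle of `σ` all of whose elements are among the first `k` elements. -/
def IsKCycleElt {N : ℕ} (σ : Equiv.Perm (Fin N)) (k : ℕ) (x : Fin N) : Prop :=
  ∀ y, σ.SameCycle x y → (y : ℕ) < k

/-- The length of the cycle of `σ` containing `x` (fixed points give length `1`). -/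
noncomputable def cycleLen {N : ℕ} (σ : Equiv.Perm (Fin N)) (x : Fin N) : ℕ :=
  Nat.card {y // σ.SameCycle x y}

/-- `C_{d,k}`: permutations `σ` of `{1,…,d+1}` in which every cycle contained in `{1,…,k}`
has odd length, together with a 2-coloring (encoded by `Bool`) of those cycles. -/
def CFull (d k : ℕ) : Type :=
  {p : Equiv.Perm (Fin (d + 1)) × (Fin (d + 1) → Bool) //
    (∀ x, IsKCycleElt p.1 k x → Odd (cycleLen p.1 x)) ∧
    (∀ x y, p.1.SameCycle x y → p.2 x = p.2 y) ∧
    (∀ x, ¬ IsKCycleElt p.1 k x → p.2 x = false)}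

/-- Permutations of `{1,…,d+1}` together with a marker which is either `none` or a fixed
point `i` with `i ≤ k`. -/
def Marked (d k : ℕ) : Type :=
  {p : Equiv.Perm (Fin (d + 1)) × Option (Fin (d + 1)) //
    ∀ i, p.2 = some i → p.1 i = i ∧ (i : ℕ) < k}



open Equiv Equiv.Perm Finset

section CfgDef
variable {α : Type} [Fintype α] [DecidableEq α]

/-- `x`'s cycle is contained in `P`. -/
def CSmall (π : Perm α) (P : Finset α) (x : α) : Prop := ∀ y, π.SameCycle x y → y ∈ P

instance (π : Perm α) (P : Finset α) : DecidablePred (CSmall π P) := fun _ => by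
  unfold CSmall; infer_instance

def Cfg (α : Type) [Fintype α] [DecidableEq α] (P : Finset α) : Type :=
  {p : Perm α × (α → Bool) //
    (∀ x, CSmall p.1 P x → Odd (Nat.card {y // p.1.SameCycle x y})) ∧
    (∀ x y, p.1.SameCycle x y → p.2 x = p.2 y) ∧
    (∀ x, ¬ CSmall p.1 P x → p.2 x = false)}

noncomputable instance (P : Finset α) : Fintype (Cfg α P) := by unfold Cfg; infer_instance

lemma clen_eq_card (π : Perm α) (x : α) (S : Finset α) (h : ∀ y, π.SameCycle x y ↔ y ∈ S) :
    Nat.card {y // π.SameCycle x y} = S.card := by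
  rw [Nat.card_congr (Equiv.subtypeEquivRight h), Nat.card_eq_fintype_card]
  exact Fintype.card_coe S

end CfgDef

section FullCycle
variable {β : Type} [Fintype β] [DecidableEq β]

lemma perm_zpow_fix {σ : Perm β} {b : β} (h : σ b = b) : ∀ z : ℤ, (σ^z) b = b := by
  have hp : ∀ m : ℕ, (σ^m) b = b := by
    intro m
    induction m with
    | zero => rfl
    | succ m ih => rw [pow_succ, Equiv.Perm.mul_apply, h, ih]
  intro z
  induction z using Int.rec with
  | ofNat m => exact_mod_cast hp m
  | negSucc m =>
    have : (σ ^ (m+1 : ℕ)) ((σ ^ Int.negSucc m) b) = (σ ^ (m+1:ℕ)) b := by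
      rw [hp (m+1)]
      have : (σ ^ (m+1:ℕ) : Perm β) * (σ ^ Int.negSucc m) = 1 := by
        rw [← zpow_natCast, ← zpow_add]
        have h9 : ((m+1 : ℕ) : ℤ) + Int.negSucc m = 0 := by
          rw [Int.negSucc_eq]; push_cast; ring
        rw [h9, zpow_zero]
      calc (σ ^ (m+1 : ℕ)) ((σ ^ Int.negSucc m) b)
          = ((σ ^ (m+1:ℕ) : Perm β) * (σ ^ Int.negSucc m)) b := rfl
        _ = b := by rw [this]; rfl
    exact (Equiv.injective _) this

/-- The set of full cycles through `b`. -/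
def FullC (b : β) : Type := {c : Perm β // ∀ y, c.SameCycle b y}

instance (b : β) : Fintype (FullC b) := by unfold FullC; infer_instance

variable {b : β}

lemma fullc_no_return {c : Perm β} (hc : ∀ y, c.SameCycle b y) {d : ℕ}
    (hd : 0 < d) (hdt : d ≤ Fintype.card β - 1) : (c^d) b ≠ b := by
  intro heq
  have hsurj : ∀ y : β, ∃ m ∈ Finset.range d, (c ^ m) b = y := by
    intro y
    obtain ⟨z, hz⟩ := hc y
    have hbd : (c ^ (d:ℤ)) b = b := by rw [zpow_natCast]; exact heq
    have hfix : ∀ q : ℤ, (c ^ ((d:ℤ) * q)) b = b := by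
      intro q
      rw [zpow_mul]
      exact perm_zpow_fix hbd q
    refine ⟨(z % d).toNat, ?_, ?_⟩
    · rw [Finset.mem_range]
      have h1 : 0 ≤ z % d := Int.emod_nonneg z (by exact_mod_cast hd.ne')
      have h2 : z % d < d := Int.emod_lt_of_pos z (by exact_mod_cast hd)
      omega
    · have h1 : 0 ≤ z % d := Int.emod_nonneg z (by exact_mod_cast hd.ne')
      have : (c ^ z) b = (c ^ (z % d)) b := by
        conv_lhs => rw [← Int.emod_add_mul_ediv z d]
        rw [zpow_add]
        simp only [Equiv.Perm.mul_apply]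
        rw [hfix]
      rw [← hz, this]
      rw [← zpow_natCast, Int.toNat_of_nonneg h1]
  have hcard : Fintype.card β ≤ d := by
    have hs : Set.SurjOn (fun m => (c ^ m) b) ↑(Finset.range d) ↑(Finset.univ : Finset β) := by
      intro y _
      obtain ⟨m, hm, hmy⟩ := hsurj y
      exact ⟨m, by simpa using hm, hmy⟩
    have := Finset.card_le_card_of_surjOn _ hs
    simpa using this
  have hβ : 1 ≤ Fintype.card β := Fintype.card_pos_iff.mpr ⟨b⟩
  omega

lemma fullc_inj {c : Perm β} (hc : ∀ y, c.SameCycle b y) {i j : ℕ}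
    (hi : i ≤ Fintype.card β - 1) (hj : j ≤ Fintype.card β - 1)
    (h : (c^i) b = (c^j) b) : i = j := by
  rcases Nat.le_total i j with hle | hle
  all_goals {
    first
    | (by_contra hne
       have hd : 0 < j - i := by omega
       apply fullc_no_return hc hd (by omega : j - i ≤ Fintype.card β - 1)
       have hcomm : (c ^ i) ((c ^ (j-i)) b) = (c ^ i) b := by
         rw [← Equiv.Perm.mul_apply, ← pow_add]
         have : i + (j - i) = j := by omega
         rw [this, h]
       exact Equiv.injective _ hcomm)
    | (by_contra hne
       have hd : 0 < i - j := by omega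
       apply fullc_no_return hc hd (by omega : i - j ≤ Fintype.card β - 1)
       have hcomm : (c ^ j) ((c ^ (i-j)) b) = (c ^ j) b := by
         rw [← Equiv.Perm.mul_apply, ← pow_add]
         have : j + (i - j) = i := by omega
         rw [this, h]
       exact Equiv.injective _ hcomm)
  }

lemma fullc_surj {c : Perm β} (hc : ∀ y, c.SameCycle b y) (y : β) :
    ∃ m ≤ Fintype.card β - 1, (c^m) b = y := by
  have hβ : 1 ≤ Fintype.card β := Fintype.card_pos_iff.mpr ⟨b⟩
  rcases eq_or_lt_of_le hβ with h1 | h1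
  · refine ⟨0, by omega, ?_⟩
    have : Function.Surjective (fun _ : Unit => b) := by
      intro z
      have := Fintype.card_le_one_iff.mp (le_of_eq h1.symm)
      exact ⟨(), (this b z)⟩
    obtain ⟨_, hz⟩ := this y
    simpa using hz
  · -- card β ≥ 2; use injectivity of j ↦ c^j b on Fin (card β)
    set n := Fintype.card β with hn
    have hinj : Function.Injective (fun j : Fin n => (c ^ (j:ℕ)) b) := by
      intro i j hij
      have hi := i.isLt
      have hj := j.isLt
      exact Fin.ext (fullc_inj hc (by omega) (by omega) hij)
    have hbij : Function.Bijective (fun j : Fin n => (c ^ (j:ℕ)) b) :=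
      (Fintype.bijective_iff_injective_and_card _).mpr ⟨hinj, by simp [hn]⟩
    obtain ⟨j, hj⟩ := hbij.2 y
    exact ⟨(j:ℕ), by omega, hj⟩

lemma fullc_ext {c c' : Perm β} (hc : ∀ y, c.SameCycle b y) (hc' : ∀ y, c'.SameCycle b y)
    (h : ∀ m ≤ Fintype.card β - 1, (c^m) b = (c'^m) b) : c = c' := by
  set n := Fintype.card β with hn
  have hβ : 1 ≤ n := Fintype.card_pos_iff.mpr ⟨b⟩
  have htop : (c^n) b = b := by
    obtain ⟨j, hj, hjy⟩ := fullc_surj hc ((c^n) b)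
    rcases Nat.eq_zero_or_pos j with rfl | hj0
    · simpa using hjy.symm
    · exfalso
      apply fullc_no_return hc (show 0 < n - j by omega) (show n - j ≤ n - 1 by omega)
      have : (c ^ j) ((c ^ (n-j)) b) = (c ^ j) b := by
        rw [← Equiv.Perm.mul_apply, ← pow_add]
        have hnj : j + (n - j) = n := by omega
        rw [hnj, hjy]
      exact Equiv.injective _ this
  have htop' : (c'^n) b = b := by
    obtain ⟨j, hj, hjy⟩ := fullc_surj hc' ((c'^n) b)
    rcases Nat.eq_zero_or_pos j with rfl | hj0
    · simpa using hjy.symm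
    · exfalso
      apply fullc_no_return hc' (show 0 < n - j by omega) (show n - j ≤ n - 1 by omega)
      have : (c' ^ j) ((c' ^ (n-j)) b) = (c' ^ j) b := by
        rw [← Equiv.Perm.mul_apply, ← pow_add]
        have hnj : j + (n - j) = n := by omega
        rw [hnj, hjy]
      exact Equiv.injective _ this
  ext y
  obtain ⟨m, hm, rfl⟩ := fullc_surj hc y
  rcases Nat.lt_or_ge m (n-1) with hlt | hge
  · have e1 : c ((c^m) b) = (c^(m+1)) b := by
      rw [_root_.pow_succ', Equiv.Perm.mul_apply]
    have e2 : c' ((c'^m) b) = (c'^(m+1)) b := by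
      rw [_root_.pow_succ', Equiv.Perm.mul_apply]
    rw [e1, h (m+1) (by omega), ← e2, h m hm]
  · have hme : m = n - 1 := by omega
    subst hme
    have e1 : c ((c^(n-1)) b) = (c^n) b := by
      have e0 : c ((c^(n-1)) b) = (c^((n-1)+1)) b := by
        rw [_root_.pow_succ', Equiv.Perm.mul_apply]
      rw [e0]
      congr 2
      omega
    have e2 : c' ((c'^(n-1)) b) = (c'^n) b := by
      have e0 : c' ((c'^(n-1)) b) = (c'^((n-1)+1)) b := by
        rw [_root_.pow_succ', Equiv.Perm.mul_apply]
      rw [e0]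
      congr 2
      omega
    have hy : (c^(n-1)) b = (c'^(n-1)) b := h (n-1) (le_refl _)
    calc c ((c^(n-1)) b) = b := by rw [e1, htop]
      _ = (c'^n) b := htop'.symm
      _ = c' ((c'^(n-1)) b) := by rw [e2]
      _ = c' ((c^(n-1)) b) := by rw [hy]

end FullCycle

section FullCount
variable {β : Type} [Fintype β] [DecidableEq β] {b : β}
open Fin.NatCast

lemma card_ne (b : β) : Fintype.card {y : β // y ≠ b} = Fintype.card β - 1 := by
  have h0 := Fintype.card_congr (Equiv.optionSubtypeNe b)
  rw [Fintype.card_option] at h0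
  omega

def wmap (c : FullC b) (i : Fin (Fintype.card β - 1)) : {y : β // y ≠ b} :=
  ⟨(c.1 ^ ((i:ℕ)+1)) b, by
    intro h
    have hi := i.isLt
    have h0 : ((c.1)^((i:ℕ)+1)) b = ((c.1)^(0:ℕ)) b := by simpa using h
    have := fullc_inj c.2 (i := (i:ℕ)+1) (j := 0) (by omega) (by omega) h0
    omega⟩

lemma wmap_bij (c : FullC b) : Function.Bijective (wmap c) := by
  rw [Fintype.bijective_iff_injective_and_card]
  constructor
  · intro i j hij
    have hi := i.isLt; have hj := j.isLt
    have : ((i:ℕ)+1) = ((j:ℕ)+1) :=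
      fullc_inj c.2 (by omega) (by omega) (congrArg Subtype.val hij)
    exact Fin.ext (by omega)
  · rw [card_ne, Fintype.card_fin]

noncomputable def Phi (c : FullC b) : (Fin (Fintype.card β - 1) ≃ {y : β // y ≠ b}) :=
  Equiv.ofBijective _ (wmap_bij c)

lemma Phi_apply (c : FullC b) (i : Fin (Fintype.card β - 1)) :
    (Phi c i : β) = (c.1 ^ ((i:ℕ)+1)) b := rfl

lemma permCongr_mul {γ δ : Type} (E : γ ≃ δ) (σ τ : Perm γ) :
    E.permCongr σ * E.permCongr τ = E.permCongr (σ * τ) := by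
  ext x
  simp [Equiv.permCongr_apply, Equiv.Perm.mul_apply]

lemma permCongr_pow {γ δ : Type} (E : γ ≃ δ) (σ : Perm γ) (m : ℕ) :
    (E.permCongr σ)^m = E.permCongr (σ^m) := by
  induction m with
  | zero =>
    ext x
    simp [Equiv.permCongr_apply]
  | succ m ih =>
    rw [pow_succ, ih, _root_.permCongr_mul, ← pow_succ]

lemma finRotate_pow (t m : ℕ) : ((finRotate (t+1))^m) 0 = (m : Fin (t+1)) := by
  induction m with
  | zero => simp
  | succ m ih =>
    rw [_root_.pow_succ', Equiv.Perm.mul_apply, ih, finRotate_succ_apply]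
    push_cast
    ring

variable (g : Fin (Fintype.card β - 1) ≃ {y : β // y ≠ b})

def cgEquiv : Fin (Fintype.card β - 1 + 1) ≃ β :=
  (finSuccEquiv _).trans ((g.optionCongr).trans (Equiv.optionSubtypeNe b))

lemma cgEquiv_zero : cgEquiv g 0 = b := by
  simp [cgEquiv]

lemma cgEquiv_succ (i : Fin (Fintype.card β - 1)) (h : (i:ℕ)+1 < Fintype.card β - 1 + 1) :
    cgEquiv g ⟨(i:ℕ)+1, h⟩ = g i := by
  have : (⟨(i:ℕ)+1, h⟩ : Fin (Fintype.card β - 1 + 1)) = Fin.succ i := rfl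
  rw [this]
  simp [cgEquiv, finSuccEquiv_succ]

def cg : Perm β := (cgEquiv g).permCongr (finRotate _)

lemma cg_pow_b (m : ℕ) : ((cg g)^m) b = cgEquiv g ((m : ℕ) : Fin (Fintype.card β - 1 + 1)) := by
  rw [cg, permCongr_pow]
  have hsymm : (cgEquiv g).symm b = 0 := by
    rw [Equiv.symm_apply_eq, cgEquiv_zero]
  rw [Equiv.permCongr_apply, hsymm, finRotate_pow]

lemma cg_full : ∀ y, (cg g).SameCycle b y := by
  intro y
  set j := (cgEquiv g).symm y with hj
  refine ⟨((j:ℕ) : ℤ), ?_⟩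
  rw [zpow_natCast, cg_pow_b, Fin.cast_val_eq_self]
  exact Equiv.apply_symm_apply _ _

lemma Phi_cg : Phi (⟨cg g, cg_full g⟩ : FullC b) = g := by
  apply Equiv.ext
  intro i
  apply Subtype.ext
  erw [Phi_apply]
  simp only
  rw [cg_pow_b]
  have hi := i.isLt
  have hcast : (((i:ℕ)+1 : ℕ) : Fin (Fintype.card β - 1 + 1)) = ⟨(i:ℕ)+1, by omega⟩ := by
    apply Fin.ext
    rw [Fin.val_natCast]
    exact Nat.mod_eq_of_lt (by omega)
  rw [hcast, cgEquiv_succ]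

lemma Phi_bijective : Function.Bijective (Phi (b := b)) := by
  constructor
  · intro c c' h
    apply Subtype.ext
    apply fullc_ext c.2 c'.2
    intro m hm
    rcases Nat.eq_zero_or_pos m with rfl | hm0
    · rfl
    · have hmlt : m - 1 < Fintype.card β - 1 := by
        have hβ : 1 ≤ Fintype.card β := Fintype.card_pos_iff.mpr ⟨b⟩
        omega
    -- apply equality of equivs at index ⟨m-1⟩
      have := congrArg (fun (E : Fin (Fintype.card β - 1) ≃ {y : β // y ≠ b}) => (E ⟨m-1, hmlt⟩ : β)) h
      simp only [Phi_apply] at this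
      have hm1 : m - 1 + 1 = m := by omega
      rwa [hm1] at this
  · intro g
    exact ⟨⟨cg g, cg_full g⟩, Phi_cg g⟩

lemma card_fullC_aux : Nat.card (FullC b) = (Fintype.card β - 1)! := by
  rw [Nat.card_congr (Equiv.ofBijective _ (Phi_bijective (b := b))), Nat.card_eq_fintype_card]
  rw [Fintype.card_equiv (Fintype.equivOfCardEq (by rw [card_ne, Fintype.card_fin]))]
  rw [Fintype.card_fin]

end FullCount

section Transfer
variable {α : Type} [Fintype α] [DecidableEq α]
variable {S : Finset α} {e : α}

/-- zpow of subtypeCongr -/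
lemma sc_zpow (c : Perm {x : α // x ∈ S}) (ρ : Perm {x : α // ¬ x ∈ S}) (z : ℤ) :
    (Equiv.Perm.subtypeCongr c ρ)^z = Equiv.Perm.subtypeCongr (c^z) (ρ^z) := by
  have h : Equiv.Perm.subtypeCongr c ρ
      = Equiv.Perm.subtypeCongrHom (fun x : α => x ∈ S) (c, ρ) := rfl
  rw [h, ← map_zpow]
  rfl

lemma sc_same_left (c : Perm {x : α // x ∈ S}) (ρ : Perm {x : α // ¬ x ∈ S})
    (x : {x : α // x ∈ S}) (y : α) :
    (Equiv.Perm.subtypeCongr c ρ).SameCycle ↑x y ↔ ∃ hy : y ∈ S, c.SameCycle x ⟨y, hy⟩ := by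
  constructor
  · rintro ⟨z, hz⟩
    rw [sc_zpow] at hz
    rw [Equiv.Perm.subtypeCongr.left_apply _ _ x.2] at hz
    have hxx : (⟨(x:α), x.2⟩ : {x : α // x ∈ S}) = x := rfl
    rw [hxx] at hz
    refine ⟨hz ▸ ((c^z) x).2, z, ?_⟩
    apply Subtype.ext
    simpa using hz
  · rintro ⟨hy, z, hz⟩
    refine ⟨z, ?_⟩
    rw [sc_zpow, Equiv.Perm.subtypeCongr.left_apply _ _ x.2]
    have hxx : (⟨(x:α), x.2⟩ : {x : α // x ∈ S}) = x := rfl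
    rw [hxx, hz]

lemma sc_same_right (c : Perm {x : α // x ∈ S}) (ρ : Perm {x : α // ¬ x ∈ S})
    (x : {x : α // ¬ x ∈ S}) (y : α) :
    (Equiv.Perm.subtypeCongr c ρ).SameCycle ↑x y ↔ ∃ hy : ¬ y ∈ S, ρ.SameCycle x ⟨y, hy⟩ := by
  constructor
  · rintro ⟨z, hz⟩
    rw [sc_zpow] at hz
    rw [Equiv.Perm.subtypeCongr.right_apply _ _ x.2] at hz
    have hxx : (⟨(x:α), x.2⟩ : {x : α // ¬ x ∈ S}) = x := rfl
    rw [hxx] at hz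
    refine ⟨hz ▸ ((ρ^z) x).2, z, ?_⟩
    apply Subtype.ext
    simpa using hz
  · rintro ⟨hy, z, hz⟩
    refine ⟨z, ?_⟩
    rw [sc_zpow, Equiv.Perm.subtypeCongr.right_apply _ _ x.2]
    have hxx : (⟨(x:α), x.2⟩ : {x : α // ¬ x ∈ S}) = x := rfl
    rw [hxx, hz]

variable {π : Perm α}

/-- stability of S under π with a full cycle on S through e -/
lemma hst_of_full (hfull : ∀ y, π.SameCycle e y ↔ y ∈ S) :
    ∀ x, π x ∈ S ↔ x ∈ S := by
  intro x
  rw [Iff.comm]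
  constructor
  · intro hx
    exact (hfull _).mp (((hfull x).mpr hx).trans ⟨1, rfl⟩)
  · intro hx
    have h1 : π.SameCycle e (π x) := (hfull _).mpr hx
    have h2 : π.SameCycle x (π x) := ⟨1, rfl⟩
    exact (hfull x).mp (h1.trans h2.symm)

lemma hst_of_full' (hfull : ∀ y, π.SameCycle e y ↔ y ∈ S) :
    ∀ x, (fun z => ¬ z ∈ S) (π x) ↔ (fun z => ¬ z ∈ S) x := fun x => not_congr (hst_of_full hfull x)

lemma same_of_mem (hfull : ∀ y, π.SameCycle e y ↔ y ∈ S) {x : α} (hx : x ∈ S) (y : α) :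
    π.SameCycle x y ↔ y ∈ S := by
  constructor
  · intro h
    exact (hfull y).mp (((hfull x).mpr hx).trans h)
  · intro hy
    exact ((hfull x).mpr hx).symm.trans ((hfull y).mpr hy)

lemma not_same_of_not_mem (hfull : ∀ y, π.SameCycle e y ↔ y ∈ S) {x : α} (hx : ¬ x ∈ S)
    {y : α} (hy : y ∈ S) : ¬ π.SameCycle x y := by
  intro h
  exact hx ((same_of_mem hfull hy x).mp h.symm)

lemma clen_of_mem (hfull : ∀ y, π.SameCycle e y ↔ y ∈ S) {x : α} (hx : x ∈ S) :
    Nat.card {y // π.SameCycle x y} = S.card :=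
  clen_eq_card π x S (same_of_mem hfull hx)

lemma clen_of_not_mem (hfull : ∀ y, π.SameCycle e y ↔ y ∈ S) {x : α} (hx : ¬ x ∈ S) :
    Nat.card {y // π.SameCycle x y}
      = Nat.card {y' // (π.subtypePerm (p := fun z => ¬ z ∈ S) (hst_of_full' hfull)).SameCycle ⟨x, hx⟩ y'} := by
  apply Nat.card_congr
  refine ⟨fun y => ⟨⟨(y : α), fun hyS => not_same_of_not_mem hfull hx hyS y.2⟩,
      Equiv.Perm.SameCycle.subtypePerm y.2⟩,
    fun y' => ⟨(y' : {x : α // ¬ x ∈ S}), (Equiv.Perm.sameCycle_subtypePerm).mp y'.2⟩,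
    fun y => by ext; rfl, fun y' => by ext; rfl⟩

/-- smallness transfer to the outside part -/
lemma csmall_outside (hfull : ∀ y, π.SameCycle e y ↔ y ∈ S) (Q : Finset α) {x : α} (hx : ¬ x ∈ S) :
    CSmall π Q x ↔ CSmall (π.subtypePerm (p := fun z => ¬ z ∈ S) (hst_of_full' hfull)) (Q.subtype fun z => ¬ z ∈ S) ⟨x, hx⟩ := by
  constructor
  · intro h y' hy'
    rw [Finset.mem_subtype]
    exact h _ ((Equiv.Perm.sameCycle_subtypePerm).mp hy')
  · intro h y hy
    have hyS : ¬ y ∈ S := fun hyS => not_same_of_not_mem hfull hx hyS hy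
    have := h ⟨y, hyS⟩ (Equiv.Perm.SameCycle.subtypePerm hy)
    rwa [Finset.mem_subtype] at this

lemma csmall_of_mem (hfull : ∀ y, π.SameCycle e y ↔ y ∈ S) {x : α} (hx : x ∈ S) (Q : Finset α) :
    CSmall π Q x ↔ S ⊆ Q := by
  constructor
  · intro h y hy
    exact h y ((same_of_mem hfull hx y).mpr hy)
  · intro h y hy
    exact h ((same_of_mem hfull hx y).mp hy)

/-- reconstruction: subtypeCongr of the two restrictions is π -/
lemma subtypeCongr_restrict (hfull : ∀ y, π.SameCycle e y ↔ y ∈ S) :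
    Equiv.Perm.subtypeCongr (π.subtypePerm (hst_of_full hfull))
      (π.subtypePerm (p := fun z => ¬ z ∈ S) (hst_of_full' hfull)) = π := by
  ext x
  by_cases hx : x ∈ S
  · rw [Equiv.Perm.subtypeCongr.left_apply _ _ hx]
    rfl
  · rw [Equiv.Perm.subtypeCongr.right_apply _ _ hx]
    rfl

/-- the full-cycle property of subtypeCongr -/
lemma subtypeCongr_full (heS : e ∈ S) (C : FullC (⟨e, heS⟩ : {x : α // x ∈ S}))
    (ρ : Perm {x : α // ¬ x ∈ S}) :
    ∀ y, (Equiv.Perm.subtypeCongr C.1 ρ).SameCycle e y ↔ y ∈ S := by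
  intro y
  have h := sc_same_left C.1 ρ ⟨e, heS⟩ y
  constructor
  · rintro hsc
    obtain ⟨hy, _⟩ := h.mp hsc
    exact hy
  · intro hy
    exact h.mpr ⟨hy, C.2 ⟨y, hy⟩⟩

lemma subtypePerm_subtypeCongr_left (heS : e ∈ S) (C : FullC (⟨e, heS⟩ : {x : α // x ∈ S}))
    (ρ : Perm {x : α // ¬ x ∈ S}) :
    (Equiv.Perm.subtypeCongr C.1 ρ).subtypePerm
      (hst_of_full (subtypeCongr_full heS C ρ)) = C.1 := by
  ext x
  simp only [Equiv.Perm.subtypePerm_apply]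
  rw [Equiv.Perm.subtypeCongr.left_apply _ _ x.2]

lemma subtypePerm_subtypeCongr_right (heS : e ∈ S) (C : FullC (⟨e, heS⟩ : {x : α // x ∈ S}))
    (ρ : Perm {x : α // ¬ x ∈ S}) :
    (Equiv.Perm.subtypeCongr C.1 ρ).subtypePerm
      (hst_of_full' (subtypeCongr_full heS C ρ)) = ρ := by
  ext x
  simp only [Equiv.Perm.subtypePerm_apply]
  rw [Equiv.Perm.subtypeCongr.right_apply _ _ x.2]

end Transfer

section FiberEquiv
variable {α : Type} [Fintype α] [DecidableEq α]

def XCfg (Q : Finset α) (S : Finset α) (e : α) : Type :=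
  {c : Cfg α Q // ∀ y, c.1.1.SameCycle e y ↔ y ∈ S}

noncomputable instance (Q S : Finset α) (e : α) : Fintype (XCfg Q S e) := by
  unfold XCfg; infer_instance

lemma rest_cond (Q S : Finset α) (e : α) {π : Perm α} {f : α → Bool}
    (hfull : ∀ y, π.SameCycle e y ↔ y ∈ S)
    (h1 : ∀ x, CSmall π Q x → Odd (Nat.card {y // π.SameCycle x y}))
    (h2 : ∀ x y, π.SameCycle x y → f x = f y)
    (h3 : ∀ x, ¬ CSmall π Q x → f x = false) :
    (∀ x', CSmall (π.subtypePerm (p := fun z => ¬ z ∈ S) (hst_of_full' hfull)) (Q.subtype fun z => ¬ z ∈ S) x' →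
        Odd (Nat.card {y' // (π.subtypePerm (p := fun z => ¬ z ∈ S) (hst_of_full' hfull)).SameCycle x' y'})) ∧
    (∀ x' y', (π.subtypePerm (p := fun z => ¬ z ∈ S) (hst_of_full' hfull)).SameCycle x' y' → f ↑x' = f ↑y') ∧
    (∀ x', ¬ CSmall (π.subtypePerm (p := fun z => ¬ z ∈ S) (hst_of_full' hfull)) (Q.subtype fun z => ¬ z ∈ S) x' →
        f ↑x' = false) := by
  refine ⟨?_, ?_, ?_⟩
  · intro x' hx'
    have hsm : CSmall π Q ↑x' := (csmall_outside hfull Q x'.2).mpr hx'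
    have h := h1 _ hsm
    rwa [clen_of_not_mem hfull x'.2] at h
  · intro x' y' h
    exact h2 _ _ ((Equiv.Perm.sameCycle_subtypePerm).mp h)
  · intro x' hx'
    exact h3 _ (fun hsm => hx' ((csmall_outside hfull Q x'.2).mp hsm))

variable {Q S : Finset α} {e : α}

lemma back_cond_B (heS : e ∈ S) (heQ : e ∉ Q)
    (C : FullC (⟨e, heS⟩ : {x : α // x ∈ S})) (ρ : Perm {x : α // ¬ x ∈ S})
    (f' : {x : α // ¬ x ∈ S} → Bool)
    (r1 : ∀ x', CSmall ρ (Q.subtype fun z => ¬ z ∈ S) x' →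
        Odd (Nat.card {y' // ρ.SameCycle x' y'}))
    (r2 : ∀ x' y', ρ.SameCycle x' y' → f' x' = f' y')
    (r3 : ∀ x', ¬ CSmall ρ (Q.subtype fun z => ¬ z ∈ S) x' → f' x' = false) :
    (∀ x, CSmall (Equiv.Perm.subtypeCongr C.1 ρ) Q x →
        Odd (Nat.card {y // (Equiv.Perm.subtypeCongr C.1 ρ).SameCycle x y})) ∧
    (∀ x y, (Equiv.Perm.subtypeCongr C.1 ρ).SameCycle x y →
        (if hx : x ∈ S then false else f' ⟨x, hx⟩) = (if hy : y ∈ S then false else f' ⟨y, hy⟩)) ∧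
    (∀ x, ¬ CSmall (Equiv.Perm.subtypeCongr C.1 ρ) Q x →
        (if hx : x ∈ S then false else f' ⟨x, hx⟩) = false) := by
  have hfull := subtypeCongr_full heS C ρ
  have hrr := subtypePerm_subtypeCongr_right heS C ρ
  refine ⟨?_, ?_, ?_⟩
  · intro x hx
    by_cases hxS : x ∈ S
    · exact absurd (((csmall_of_mem hfull hxS Q).mp hx) heS) heQ
    · have h := (csmall_outside hfull Q hxS).mp hx
      rw [hrr] at h
      have h' := r1 _ h
      rw [clen_of_not_mem hfull hxS, hrr]
      exact h'
  · intro x y h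
    by_cases hxS : x ∈ S
    · have hyS : y ∈ S := (same_of_mem hfull hxS y).mp h
      rw [dif_pos hxS, dif_pos hyS]
    · have hyS : ¬ y ∈ S := fun hyS => not_same_of_not_mem hfull hxS hyS h
      rw [dif_neg hxS, dif_neg hyS]
      apply r2
      rw [← hrr]
      exact Equiv.Perm.SameCycle.subtypePerm h
  · intro x hx
    by_cases hxS : x ∈ S
    · rw [dif_pos hxS]
    · rw [dif_neg hxS]
      apply r3
      intro hsm
      rw [← hrr] at hsm
      exact hx ((csmall_outside hfull Q hxS).mpr hsm)

lemma back_cond_K (heS : e ∈ S) (hSQ : S ⊆ Q) (hoddS : Odd S.card) (b : Bool)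
    (C : FullC (⟨e, heS⟩ : {x : α // x ∈ S})) (ρ : Perm {x : α // ¬ x ∈ S})
    (f' : {x : α // ¬ x ∈ S} → Bool)
    (r1 : ∀ x', CSmall ρ (Q.subtype fun z => ¬ z ∈ S) x' →
        Odd (Nat.card {y' // ρ.SameCycle x' y'}))
    (r2 : ∀ x' y', ρ.SameCycle x' y' → f' x' = f' y')
    (r3 : ∀ x', ¬ CSmall ρ (Q.subtype fun z => ¬ z ∈ S) x' → f' x' = false) :
    (∀ x, CSmall (Equiv.Perm.subtypeCongr C.1 ρ) Q x →
        Odd (Nat.card {y // (Equiv.Perm.subtypeCongr C.1 ρ).SameCycle x y})) ∧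
    (∀ x y, (Equiv.Perm.subtypeCongr C.1 ρ).SameCycle x y →
        (if hx : x ∈ S then b else f' ⟨x, hx⟩) = (if hy : y ∈ S then b else f' ⟨y, hy⟩)) ∧
    (∀ x, ¬ CSmall (Equiv.Perm.subtypeCongr C.1 ρ) Q x →
        (if hx : x ∈ S then b else f' ⟨x, hx⟩) = false) := by
  have hfull := subtypeCongr_full heS C ρ
  have hrr := subtypePerm_subtypeCongr_right heS C ρ
  refine ⟨?_, ?_, ?_⟩
  · intro x hx
    by_cases hxS : x ∈ S
    · rw [clen_of_mem hfull hxS]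
      exact hoddS
    · have h := (csmall_outside hfull Q hxS).mp hx
      rw [hrr] at h
      have h' := r1 _ h
      rw [clen_of_not_mem hfull hxS, hrr]
      exact h'
  · intro x y h
    by_cases hxS : x ∈ S
    · have hyS : y ∈ S := (same_of_mem hfull hxS y).mp h
      rw [dif_pos hxS, dif_pos hyS]
    · have hyS : ¬ y ∈ S := fun hyS => not_same_of_not_mem hfull hxS hyS h
      rw [dif_neg hxS, dif_neg hyS]
      apply r2
      rw [← hrr]
      exact Equiv.Perm.SameCycle.subtypePerm h
  · intro x hx
    by_cases hxS : x ∈ S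
    · exact absurd ((csmall_of_mem hfull hxS Q).mpr hSQ) hx
    · rw [dif_neg hxS]
      apply r3
      intro hsm
      rw [← hrr] at hsm
      exact hx ((csmall_outside hfull Q hxS).mpr hsm)

def fiberEquivB (heS : e ∈ S) (heQ : e ∉ Q) :
    XCfg Q S e ≃ FullC (⟨e, heS⟩ : {x : α // x ∈ S}) ×
      Cfg {x : α // ¬ x ∈ S} (Q.subtype fun z => ¬ z ∈ S) where
  toFun c :=
    (⟨c.1.1.1.subtypePerm (hst_of_full c.2),
        fun y' => (Equiv.Perm.sameCycle_subtypePerm).mpr ((c.2 ↑y').mpr y'.2)⟩,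
     ⟨(c.1.1.1.subtypePerm (p := fun z => ¬ z ∈ S) (hst_of_full' c.2), fun x' => c.1.1.2 ↑x'),
        rest_cond Q S e c.2 c.1.2.1 c.1.2.2.1 c.1.2.2.2⟩)
  invFun Cr :=
    ⟨⟨(Equiv.Perm.subtypeCongr Cr.1.1 Cr.2.1.1,
        fun x => if hx : x ∈ S then false else Cr.2.1.2 ⟨x, hx⟩),
      back_cond_B heS heQ Cr.1 Cr.2.1.1 Cr.2.1.2 Cr.2.2.1 Cr.2.2.2.1 Cr.2.2.2.2⟩,
     subtypeCongr_full heS Cr.1 Cr.2.1.1⟩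
  left_inv c := by
    apply Subtype.ext
    apply Subtype.ext
    apply Prod.ext
    · exact subtypeCongr_restrict c.2
    · funext x
      dsimp only
      by_cases hx : x ∈ S
      · rw [dif_pos hx]
        exact (c.1.2.2.2 x (fun hsm => heQ (((csmall_of_mem c.2 hx Q).mp hsm) heS))).symm
      · rw [dif_neg hx]
  right_inv Cr := by
    apply Prod.ext
    · exact Subtype.ext (subtypePerm_subtypeCongr_left heS Cr.1 Cr.2.1.1)
    · apply Subtype.ext
      apply Prod.ext
      · exact subtypePerm_subtypeCongr_right heS Cr.1 Cr.2.1.1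
      · funext x'
        simp only
        rw [dif_neg x'.2]

def fiberEquivK (heS : e ∈ S) (hSQ : S ⊆ Q) (hoddS : Odd S.card) :
    XCfg Q S e ≃ (FullC (⟨e, heS⟩ : {x : α // x ∈ S}) × Bool) ×
      Cfg {x : α // ¬ x ∈ S} (Q.subtype fun z => ¬ z ∈ S) where
  toFun c :=
    ((⟨c.1.1.1.subtypePerm (hst_of_full c.2),
        fun y' => (Equiv.Perm.sameCycle_subtypePerm).mpr ((c.2 ↑y').mpr y'.2)⟩,
      c.1.1.2 e),
     ⟨(c.1.1.1.subtypePerm (p := fun z => ¬ z ∈ S) (hst_of_full' c.2), fun x' => c.1.1.2 ↑x'),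
        rest_cond Q S e c.2 c.1.2.1 c.1.2.2.1 c.1.2.2.2⟩)
  invFun Cr :=
    ⟨⟨(Equiv.Perm.subtypeCongr Cr.1.1.1 Cr.2.1.1,
        fun x => if hx : x ∈ S then Cr.1.2 else Cr.2.1.2 ⟨x, hx⟩),
      back_cond_K heS hSQ hoddS Cr.1.2 Cr.1.1 Cr.2.1.1 Cr.2.1.2 Cr.2.2.1 Cr.2.2.2.1 Cr.2.2.2.2⟩,
     subtypeCongr_full heS Cr.1.1 Cr.2.1.1⟩
  left_inv c := by
    apply Subtype.ext
    apply Subtype.ext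
    apply Prod.ext
    · exact subtypeCongr_restrict c.2
    · funext x
      dsimp only
      by_cases hx : x ∈ S
      · rw [dif_pos hx]
        exact (c.1.2.2.1 x e ((same_of_mem c.2 hx e).mpr heS)).symm
      · rw [dif_neg hx]
  right_inv Cr := by
    apply Prod.ext
    · apply Prod.ext
      · exact Subtype.ext (subtypePerm_subtypeCongr_left heS Cr.1.1 Cr.2.1.1)
      · simp only
        rw [dif_pos heS]
    · apply Subtype.ext
      apply Prod.ext
      · exact subtypePerm_subtypeCongr_right heS Cr.1.1 Cr.2.1.1
      · funext x'
        simp only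
        rw [dif_neg x'.2]

lemma fiberK_empty (heS : e ∈ S) (hSQ : S ⊆ Q) (hodd : ¬ Odd S.card) :
    IsEmpty (XCfg Q S e) := by
  refine ⟨fun c => hodd ?_⟩
  have h1 := c.1.2.1 e ((csmall_of_mem c.2 heS Q).mpr hSQ)
  rwa [clen_of_mem c.2 heS] at h1

end FiberEquiv

section Outer
variable {α : Type} [Fintype α] [DecidableEq α]

lemma csmall_erase_iff {π : Perm α} {P : Finset α} {e : α} (hesc : ¬ CSmall π P e) (x : α) :
    CSmall π P x ↔ CSmall π (P.erase e) x := by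
  constructor
  · intro h y hy
    have hne : y ≠ e := by
      rintro rfl
      exact hesc (fun z hz => h z (hy.trans hz))
    exact Finset.mem_erase.mpr ⟨hne, h y hy⟩
  · intro h y hy
    exact Finset.mem_of_mem_erase (h y hy)

def escapeEquiv (P : Finset α) (e : α) :
    {c : Cfg α P // ¬ CSmall c.1.1 P e} ≃ {c : Cfg α (P.erase e) // ¬ CSmall c.1.1 P e} where
  toFun c := ⟨⟨c.1.1,
    ⟨fun x hx => c.1.2.1 x ((csmall_erase_iff c.2 x).mpr hx),
     c.1.2.2.1,
     fun x hx => c.1.2.2.2 x (fun hsm => hx ((csmall_erase_iff c.2 x).mp hsm))⟩⟩, c.2⟩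
  invFun c := ⟨⟨c.1.1,
    ⟨fun x hx => c.1.2.1 x ((csmall_erase_iff c.2 x).symm.mpr hx),
     c.1.2.2.1,
     fun x hx => c.1.2.2.2 x (fun hsm => hx ((csmall_erase_iff c.2 x).symm.mp hsm))⟩⟩, c.2⟩
  left_inv c := by
    apply Subtype.ext
    apply Subtype.ext
    rfl
  right_inv c := by
    apply Subtype.ext
    apply Subtype.ext
    rfl

def fibMap (Q P : Finset α) (e : α) (c : {c : Cfg α Q // CSmall c.1.1 P e}) :
    {T : Finset α // T ⊆ P.erase e} :=
  ⟨(Finset.univ.filter (c.1.1.1.SameCycle e)).erase e,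
    Finset.erase_subset_erase e (fun y hy => c.2 y (Finset.mem_filter.mp hy).2)⟩

def perFiberEquiv (Q P : Finset α) (e : α) (heP : e ∈ P) (T : {T : Finset α // T ⊆ P.erase e}) :
    {c : {c : Cfg α Q // CSmall c.1.1 P e} // fibMap Q P e c = T} ≃ XCfg Q (insert e T.1) e where
  toFun c := ⟨c.1.1, by
    intro y
    have hfib : (Finset.univ.filter (c.1.1.1.1.SameCycle e)).erase e = T.1 :=
      congrArg Subtype.val c.2
    have hfe : e ∈ Finset.univ.filter (c.1.1.1.1.SameCycle e) :=
      Finset.mem_filter.mpr ⟨Finset.mem_univ e, Equiv.Perm.SameCycle.refl _ _⟩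
    have hins : Finset.univ.filter (c.1.1.1.1.SameCycle e) = insert e T.1 := by
      rw [← hfib, Finset.insert_erase hfe]
    rw [← hins, Finset.mem_filter]
    simp⟩
  invFun x := ⟨⟨x.1, by
      intro y hy
      have := (x.2 y).mp hy
      rcases Finset.mem_insert.mp this with rfl | hT
      · exact heP
      · exact Finset.mem_of_mem_erase (T.2 hT)⟩, by
    apply Subtype.ext
    have heT : e ∉ T.1 := fun h => Finset.notMem_erase e P (T.2 h)
    have hins : Finset.univ.filter (x.1.1.1.SameCycle e) = insert e T.1 := by
      ext z
      rw [Finset.mem_filter]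
      simp [x.2 z]
    show (Finset.univ.filter (x.1.1.1.SameCycle e)).erase e = T.1
    rw [hins, Finset.erase_insert heT]⟩
  left_inv c := by
    apply Subtype.ext
    apply Subtype.ext
    rfl
  right_inv x := by
    apply Subtype.ext
    rfl

end Outer

section Relabel
variable {α γ : Type} [Fintype α] [DecidableEq α] [Fintype γ] [DecidableEq γ]

lemma permCongr_inv (E : α ≃ γ) (σ : Perm α) :
    (E.permCongr σ)⁻¹ = E.permCongr σ⁻¹ := by
  ext x
  simp [Equiv.permCongr_apply]
  rfl

lemma permCongr_zpow (E : α ≃ γ) (σ : Perm α) (z : ℤ) :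
    (E.permCongr σ)^z = E.permCongr (σ^z) := by
  induction z using Int.rec with
  | ofNat m => exact_mod_cast permCongr_pow E σ m
  | negSucc m =>
    rw [zpow_negSucc, zpow_negSucc, permCongr_pow, permCongr_inv]

lemma pc_sameCycle (E : α ≃ γ) (σ : Perm α) (u v : γ) :
    (E.permCongr σ).SameCycle u v ↔ σ.SameCycle (E.symm u) (E.symm v) := by
  constructor
  · rintro ⟨z, hz⟩
    refine ⟨z, ?_⟩
    rw [permCongr_zpow, Equiv.permCongr_apply] at hz
    rw [← hz, Equiv.symm_apply_apply]
  · rintro ⟨z, hz⟩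
    refine ⟨z, ?_⟩
    rw [permCongr_zpow, Equiv.permCongr_apply, hz, Equiv.apply_symm_apply]

lemma pc_clen (E : α ≃ γ) (σ : Perm α) (u : γ) :
    Nat.card {v // (E.permCongr σ).SameCycle u v} = Nat.card {y // σ.SameCycle (E.symm u) y} := by
  apply Nat.card_congr
  exact Equiv.subtypeEquiv E.symm (fun v => pc_sameCycle E σ u v)

lemma pc_csmall (E : α ≃ γ) (σ : Perm α) {P : Finset α} {R : Finset γ}
    (hE : ∀ x, x ∈ P ↔ E x ∈ R) (u : γ) :
    CSmall (E.permCongr σ) R u ↔ CSmall σ P (E.symm u) := by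
  constructor
  · intro h y hy
    have := h (E y) ((pc_sameCycle E σ u (E y)).mpr (by rwa [Equiv.symm_apply_apply]))
    rwa [← hE] at this
  · intro h v hv
    have := h (E.symm v) ((pc_sameCycle E σ u v).mp hv)
    rw [hE] at this
    rwa [Equiv.apply_symm_apply] at this

def relabelCfg (E : α ≃ γ) (P : Finset α) (R : Finset γ) (hE : ∀ x, x ∈ P ↔ E x ∈ R) :
    Cfg α P ≃ Cfg γ R where
  toFun c := ⟨(E.permCongr c.1.1, c.1.2 ∘ E.symm),
    ⟨fun u hu => by
        rw [pc_clen]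
        exact c.2.1 _ ((pc_csmall E c.1.1 hE u).mp hu),
      fun u v huv => c.2.2.1 _ _ ((pc_sameCycle E c.1.1 u v).mp huv),
      fun u hu => c.2.2.2 _ (fun hsm => hu ((pc_csmall E c.1.1 hE u).mpr hsm))⟩⟩
  invFun c := ⟨(E.symm.permCongr c.1.1, c.1.2 ∘ E.symm.symm),
    ⟨fun u hu => by
        rw [pc_clen]
        exact c.2.1 _ ((pc_csmall E.symm c.1.1 (fun x => by
          rw [hE (E.symm x), Equiv.apply_symm_apply]) u).mp hu),
      fun u v huv => c.2.2.1 _ _ ((pc_sameCycle E.symm c.1.1 u v).mp huv),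
      fun u hu => c.2.2.2 _ (fun hsm => hu ((pc_csmall E.symm c.1.1 (fun x => by
          rw [hE (E.symm x), Equiv.apply_symm_apply]) u).mpr hsm))⟩⟩
  left_inv c := by
    apply Subtype.ext
    apply Prod.ext
    · ext x
      simp [Equiv.permCongr_apply]
    · funext x
      simp
  right_inv c := by
    apply Subtype.ext
    apply Prod.ext
    · ext x
      simp [Equiv.permCongr_apply]
    · funext x
      simp

end Relabel

section Count
variable {α : Type} [Fintype α] [DecidableEq α]

lemma subtype_erase_eq (P : Finset α) (e : α) (S : Finset α) (heS : e ∈ S) :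
    (P.erase e).subtype (fun z => ¬ z ∈ S) = P.subtype (fun z => ¬ z ∈ S) := by
  ext z
  simp only [Finset.mem_subtype, Finset.mem_erase]
  exact ⟨fun h => h.2, fun h => ⟨fun he' => z.2 (he' ▸ heS), h⟩⟩

lemma card_coe_mem (S : Finset α) : Fintype.card {x : α // x ∈ S} = S.card :=
  Fintype.card_coe S

lemma card_XK (P T : Finset α) (e : α) (heP : e ∈ P) (hT : T ⊆ P.erase e) :
    Nat.card (XCfg P (insert e T) e)
      = (if Even T.card then 2 * (T.card ! *
          Nat.card (Cfg {x : α // ¬ x ∈ insert e T} (P.subtype fun z => ¬ z ∈ insert e T))) else 0) := by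
  have heT : e ∉ T := fun h => Finset.notMem_erase e P (hT h)
  have heS : e ∈ insert e T := Finset.mem_insert_self e T
  have hSP : insert e T ⊆ P :=
    Finset.insert_subset heP (hT.trans (Finset.erase_subset e P))
  have hScard : (insert e T).card = T.card + 1 := Finset.card_insert_of_notMem heT
  by_cases hpar : Even T.card
  · rw [if_pos hpar]
    have hodd : Odd (insert e T).card := by
      rw [hScard]
      exact Even.add_one hpar
    rw [Nat.card_congr (fiberEquivK heS hSP hodd)]
    rw [Nat.card_prod, Nat.card_prod]
    rw [card_fullC_aux]
    have hcoe : Fintype.card {x : α // x ∈ insert e T} = T.card + 1 := by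
      rw [card_coe_mem, hScard]
    rw [hcoe]
    have hbool : Nat.card Bool = 2 := by
      rw [Nat.card_eq_fintype_card]
      simp
    rw [hbool]
    simp only [Nat.add_sub_cancel]
    ring
  · rw [if_neg hpar]
    have hodd : ¬ Odd (insert e T).card := by
      rw [hScard, Nat.odd_add_one]
      simpa using hpar
    have := fiberK_empty heS hSP hodd
    exact Nat.card_of_isEmpty

lemma card_XB (P T : Finset α) (e : α) (heP : e ∈ P) (hT : T ⊆ P.erase e) :
    Nat.card (XCfg (P.erase e) (insert e T) e)
      = T.card ! *
          Nat.card (Cfg {x : α // ¬ x ∈ insert e T} (P.subtype fun z => ¬ z ∈ insert e T)) := by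
  have heT : e ∉ T := fun h => Finset.notMem_erase e P (hT h)
  have heS : e ∈ insert e T := Finset.mem_insert_self e T
  have heQ : e ∉ P.erase e := Finset.notMem_erase e P
  have hScard : (insert e T).card = T.card + 1 := Finset.card_insert_of_notMem heT
  rw [Nat.card_congr (fiberEquivB heS heQ)]
  rw [Nat.card_prod, card_fullC_aux]
  have hcoe : Fintype.card {x : α // x ∈ insert e T} = T.card + 1 := by
    rw [card_coe_mem, hScard]
  rw [hcoe]
  rw [subtype_erase_eq P e (insert e T) heS]
  simp only [Nat.add_sub_cancel]

lemma card_csmall_sigma (Q P : Finset α) (e : α) (heP : e ∈ P) :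
    Nat.card {c : Cfg α Q // CSmall c.1.1 P e}
      = ∑ T ∈ (P.erase e).powerset, Nat.card (XCfg Q (insert e T) e) := by
  rw [Nat.card_congr ((Equiv.sigmaFiberEquiv (fibMap Q P e)).symm.trans
      (Equiv.sigmaCongrRight (perFiberEquiv Q P e heP)))]
  rw [Nat.card_eq_fintype_card, Fintype.card_sigma]
  rw [Finset.sum_subtype ((P.erase e).powerset) (fun T => Finset.mem_powerset)
    (fun T => Nat.card (XCfg Q (insert e T) e))]
  apply Finset.sum_congr rfl
  intro T _
  rw [Nat.card_eq_fintype_card]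

lemma card_cfg_empty : Nat.card (Cfg α (∅ : Finset α)) = (Fintype.card α)! := by
  have he : Cfg α (∅ : Finset α) ≃ Perm α :=
    { toFun := fun c => c.1.1
      invFun := fun π => ⟨(π, fun _ => false),
        ⟨fun x hx => absurd (hx x (Equiv.Perm.SameCycle.refl _ _)) (Finset.notMem_empty x),
         fun _ _ _ => rfl,
         fun _ _ => rfl⟩⟩
      left_inv := fun c => Subtype.ext (Prod.ext rfl (funext fun x =>
        (c.2.2.2 x (fun hsm =>
          absurd (hsm x (Equiv.Perm.SameCycle.refl _ _)) (Finset.notMem_empty x))).symm))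
      right_inv := fun π => rfl }
  rw [Nat.card_congr he, Nat.card_eq_fintype_card, Fintype.card_perm]

lemma card_split (P : Finset α) (e : α) :
    Nat.card (Cfg α P) = Nat.card {c : Cfg α P // CSmall c.1.1 P e}
      + Nat.card {c : Cfg α P // ¬ CSmall c.1.1 P e} := by
  rw [← Nat.card_sum]
  exact Nat.card_congr (Equiv.sumCompl (fun c : Cfg α P => CSmall c.1.1 P e)).symm

lemma card_split' (P : Finset α) (e : α) :
    Nat.card (Cfg α (P.erase e)) = Nat.card {c : Cfg α (P.erase e) // CSmall c.1.1 P e}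
      + Nat.card {c : Cfg α (P.erase e) // ¬ CSmall c.1.1 P e} := by
  rw [← Nat.card_sum]
  exact Nat.card_congr (Equiv.sumCompl (fun c : Cfg α (P.erase e) => CSmall c.1.1 P e)).symm

end Count

section Ident


/-- `F(m,N) = ∑ (-1)^t C(m,t) t! (N-t)!` -/
def Ff (m N : ℕ) : ℤ :=
  ∑ t ∈ range (m+1), (-1)^t * (m.choose t) * (t)! * ((N - t))!

lemma Ff_zero (N : ℕ) : Ff 0 N = (N)! := by
  simp [Ff]

lemma lemR (m N : ℕ) (h : m + 1 ≤ N) :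
    Ff (m+1) N = 2 * Ff m N - (N+1) * Ff m (N-1) := by
  have expand : Ff (m+1) N
      = (∑ i ∈ range (m+1), (-1 : ℤ)^(i+1) * ((m.choose i) + (m.choose (i+1))) * ((i+1))! * ((N - (i+1)))!) + 1 * 1 * ((N))! := by
    rw [Ff, Finset.sum_range_succ']
    simp [Nat.choose_succ_succ]
  have splitA : ∀ i, ((-1 : ℤ)^(i+1) * ((m.choose i) + (m.choose (i+1))) * ((i+1))! * ((N - (i+1)))!)
      = (-1 : ℤ)^(i+1) * (m.choose (i+1)) * ((i+1))! * ((N - (i+1)))!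
        + (-1 : ℤ)^(i+1) * (m.choose i) * ((i+1))! * ((N - (i+1)))! := by
    intro i; ring
  have hA : (∑ i ∈ range (m+1), (-1 : ℤ)^(i+1) * (m.choose (i+1)) * ((i+1))! * ((N - (i+1)))!) + 1 * 1 * ((N))!
      = Ff m N + (-1 : ℤ)^(m+1) * (m.choose (m+1)) * ((m+1))! * ((N - (m+1)))! := by
    rw [Finset.sum_range_succ]
    rw [Ff, Finset.sum_range_succ']
    push_cast [Nat.choose_zero_right, Nat.sub_zero, Nat.factorial_zero]
    ring
  have hB : ∀ i ∈ range (m+1), ((-1 : ℤ)^(i+1) * (m.choose i) * ((i+1))! * ((N - (i+1)))!)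
      = -((N : ℤ)+1) * ((-1 : ℤ)^i * (m.choose i) * (i)! * ((N - 1 - i))!)
        + ((-1 : ℤ)^i * (m.choose i) * (i)! * ((N - i))!) := by
    intro i hi
    rw [Finset.mem_range] at hi
    have h2 : N - (i+1) = N - 1 - i := by omega
    have h3 : N - i = (N - 1 - i) + 1 := by omega
    have h4 : ((i+1))! = ((i)! : ℤ) * (i+1) := by
      push_cast [Nat.factorial_succ]; ring
    have h5 : (((N - i))! : ℤ) = ((N-1-i))! * ((N : ℤ) - i) := by
      rw [h3, Nat.factorial_succ]
      have : ((N - 1 - i : ℕ) : ℤ) + 1 = (N : ℤ) - i := by omega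
      push_cast
      rw [this]; ring
    rw [h2, h4, h5]
    ring
  rw [expand]
  rw [Finset.sum_congr rfl (fun i _ => splitA i), Finset.sum_add_distrib]
  rw [add_right_comm, hA, Finset.sum_congr rfl hB, Finset.sum_add_distrib]
  rw [← Finset.mul_sum]
  rw [Nat.choose_succ_self]
  have h1 : Ff m N = ∑ i ∈ range (m+1), (-1 : ℤ)^i * (m.choose i) * (i)! * ((N - i))! := rfl
  have h2 : Ff m (N-1) = ∑ i ∈ range (m+1), (-1 : ℤ)^i * (m.choose i) * (i)! * ((N - 1 - i))! := rfl
  rw [← h1, ← h2]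
  push_cast
  ring

lemma lemQ (m : ℕ) : ∀ N, m + 1 ≤ N → 2 * Ff m N - ((N : ℤ) - m) * Ff m (N-1) = (N)! := by
  induction m with
  | zero =>
    intro N hN
    rw [Ff_zero, Ff_zero]
    have h0 : N - 1 + 1 = N := by omega
    have hf : ((N)! : ℤ) = (N : ℤ) * ((N-1))! := by
      calc ((N)! : ℤ) = (((N-1)+1)! : ℤ) := by rw [h0]
        _ = (((N-1) : ℕ) + 1 : ℤ) * ((N-1))! := by rw [Nat.factorial_succ]; push_cast; ring
        _ = (N:ℤ) * ((N-1))! := by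
            congr 1
            omega
    rw [hf]; push_cast; ring
  | succ m ih =>
    intro N hN
    have r1 := lemR m N (by omega)
    have r2 := lemR m (N-1) (by omega)
    have q1 := ih N (by omega)
    have q2 := ih (N-1) (by omega)
    have hN1 : ((N-1 : ℕ) : ℤ) = (N:ℤ) - 1 := by omega
    have h0 : N - 1 + 1 = N := by omega
    have hf : ((N)! : ℤ) = (N : ℤ) * ((N-1))! := by
      calc ((N)! : ℤ) = (((N-1)+1)! : ℤ) := by rw [h0]
        _ = (((N-1) : ℕ) + 1 : ℤ) * ((N-1))! := by rw [Nat.factorial_succ]; push_cast; ring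
        _ = (N:ℤ) * ((N-1))! := by congr 1; omega
    rw [r1, r2]
    rw [hN1] at q2 ⊢
    push_cast
    linear_combination 2*q1 - (N:ℤ)*q2 + hf

lemma lemH (m N : ℕ) (h : m + 1 ≤ N) :
    Ff (m+1) N + ((m:ℤ)+1) * Ff m (N-1) = (N)! := by
  have r := lemR m N h
  have q := lemQ m N h
  rw [r]
  linear_combination q

lemma cho (m j : ℕ) (hj : j ≤ m) : (m - j) * m.choose j = m * (m-1).choose j := by
  rcases Nat.lt_or_ge j m with hlt | hge
  · have hj' : j ≤ m - 1 := by omega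
    have key : ((m - j) * m.choose j) * ((j)! * (m - 1 - j)!) = (m * (m-1).choose j) * ((j)! * (m - 1 - j)!) := by
      have e1 : (m - j)! = (m - j) * (m - 1 - j)! := by
        have : m - j = (m - 1 - j) + 1 := by omega
        rw [this, Nat.factorial_succ]
      have c1 := Nat.choose_mul_factorial_mul_factorial hj (n := m)
      have c2 := Nat.choose_mul_factorial_mul_factorial hj' (n := m-1)
      have e2 : (m)! = m * (m-1)! := by
        have : m = (m - 1) + 1 := by omega
        calc (m)! = ((m-1)+1)! := by rw [← this]
          _ = ((m-1)+1) * (m-1)! := Nat.factorial_succ _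
          _ = m * (m-1)! := by rw [← this]
      calc ((m - j) * m.choose j) * ((j)! * (m - 1 - j)!)
          = m.choose j * (j)! * ((m - j) * (m - 1 - j)!) := by ring
        _ = m.choose j * (j)! * (m - j)! := by rw [e1]
        _ = (m)! := c1
        _ = m * ((m-1).choose j * (j)! * (m - 1 - j)!) := by rw [c2, e2]
        _ = (m * (m-1).choose j) * ((j)! * (m - 1 - j)!) := by ring
    have hpos : 0 < (j)! * (m - 1 - j)! := Nat.mul_pos (Nat.factorial_pos _) (Nat.factorial_pos _)
    exact Nat.eq_of_mul_eq_mul_right hpos key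
  · have hjm : j = m := le_antisymm hj hge
    subst hjm
    rcases Nat.eq_zero_or_pos j with rfl | hj0
    · simp
    · simp [Nat.choose_eq_zero_of_lt (show j - 1 < j by omega)]

/-- THE key identity. -/
lemma keyid (m n : ℕ) (h : m + 2 ≤ n) :
    ∑ j ∈ range (m+1), (-1:ℤ)^j * (m.choose j) * (j)! * ((((n-1-j) + (m-j)) * (n-2-j)!) : ℕ) = ((n-1))! := by
  have split : ∀ j ∈ range (m+1),
      (-1:ℤ)^j * (m.choose j) * (j)! * ((((n-1-j) + (m-j)) * (n-2-j)!) : ℕ)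
      = (-1:ℤ)^j * (m.choose j) * (j)! * ((n-1) - j)!
        + (m:ℤ) * ((-1:ℤ)^j * ((m-1).choose j) * (j)! * ((n-2) - j)!) := by
    intro j hj
    rw [Finset.mem_range] at hj
    have hjm : j ≤ m := by omega
    have e2 : ((n - 1 - j)! : ℤ) = ((n - 1 - j : ℕ) : ℤ) * ((n-2-j)! : ℤ) := by
      have h3 : n - 1 - j = (n - 2 - j) + 1 := by omega
      rw [h3, Nat.factorial_succ]
      push_cast
      have h4 : ((n - 2 - j : ℕ) : ℤ) + 1 = ((n - 1 - j : ℕ) : ℤ) := by omega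
      rw [h4]
    have e3 : ((m - j : ℕ) : ℤ) * (m.choose j) = (m : ℤ) * ((m-1).choose j) := by
      exact_mod_cast congrArg (fun x : ℕ => (x : ℤ)) (cho m j hjm)
    push_cast
    rw [show ((n-1) - j) = n - 1 - j from rfl, e2]
    linear_combination ((-1:ℤ)^j * (j)! * ((n-2-j)! : ℤ)) * e3
  rw [Finset.sum_congr rfl split, Finset.sum_add_distrib, ← Finset.mul_sum]
  have hA : ∑ j ∈ range (m+1), (-1:ℤ)^j * (m.choose j) * (j)! * ((n-1) - j)! = Ff m (n-1) := rfl
  have hB : ∑ j ∈ range (m+1), (-1:ℤ)^j * ((m-1).choose j) * (j)! * ((n-2) - j)! = Ff (m-1) (n-2) := by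
    rcases Nat.eq_zero_or_pos m with rfl | hm
    · rfl
    · have hm1 : m - 1 + 1 = m := by omega
      rw [Ff, ← hm1, Finset.sum_range_succ]
      simp [Nat.choose_succ_self]
  rw [hA, hB]
  rcases Nat.eq_zero_or_pos m with rfl | hm
  · simp [Ff_zero]
  · have hm1 : m - 1 + 1 = m := by omega
    have hm2 : ((m-1 : ℕ) : ℤ) = (m:ℤ) - 1 := by omega
    have hh := lemH (m-1) (n-1) (by omega)
    rw [hm1] at hh
    have h22 : (n-1) - 1 = n - 2 := by omega
    rw [h22, hm2] at hh
    linear_combination hh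

end Ident

theorem cfg_card_main : ∀ (s : ℕ) (α : Type) [Fintype α] [DecidableEq α] (P : Finset α),
    Fintype.card α + P.card ≤ s → P.card + 1 ≤ Fintype.card α →
    Nat.card (Cfg α P) = (Fintype.card α + P.card) * (Fintype.card α - 1)! := by
  intro s
  induction s using Nat.strong_induction_on with
  | _ s IH =>
  intro α _ _ P hs hk
  rcases Finset.eq_empty_or_nonempty P with rfl | ⟨e, heP⟩
  · rw [card_cfg_empty]
    have hn : 1 ≤ Fintype.card α := by
      have := hk
      simp only [Finset.card_empty] at this
      omega
    rw [Finset.card_empty, Nat.add_zero]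
    exact (Nat.mul_factorial_pred (by omega)).symm
  · have hk1 : 1 ≤ P.card := Finset.card_pos.mpr ⟨e, heP⟩
    set n := Fintype.card α with hndef
    set k := P.card with hkdef
    have hkn : k + 1 ≤ n := hk
    have hec : (P.erase e).card = k - 1 := by rw [Finset.card_erase_of_mem heP]
    -- value of the rest-configuration counts, via the inductive hypothesis
    have hCT : ∀ T ∈ (P.erase e).powerset,
        Nat.card (Cfg {x : α // ¬ x ∈ insert e T} (P.subtype fun z => ¬ z ∈ insert e T))
          = ((n - 1 - T.card) + (k - 1 - T.card)) * ((n - 2 - T.card))! := by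
      intro T hT
      rw [Finset.mem_powerset] at hT
      have heT : e ∉ T := fun h => Finset.notMem_erase e P (hT h)
      have hTcard : T.card ≤ k - 1 := by
        have := Finset.card_le_card hT
        omega
      have hScard : (insert e T).card = T.card + 1 := Finset.card_insert_of_notMem heT
      have hg : Fintype.card {x : α // ¬ x ∈ insert e T} = n - 1 - T.card := by
        rw [Fintype.card_subtype_compl, card_coe_mem, hScard]
        omega
      have h1 : P.filter (fun z => z ∈ insert e T) = insert e T := by
        ext z
        simp only [Finset.mem_filter, Finset.mem_insert]
        constructor
        · rintro ⟨_, h⟩; exact h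
        · rintro (rfl | h)
          · exact ⟨heP, Or.inl rfl⟩
          · exact ⟨Finset.mem_of_mem_erase (hT h), Or.inr h⟩
      have hP' : (P.subtype fun z => ¬ z ∈ insert e T).card = k - 1 - T.card := by
        rw [Finset.card_subtype]
        have h2 := Finset.card_filter_add_card_filter_not
          (s := P) (p := fun z => z ∈ insert e T)
        rw [h1, hScard] at h2
        omega
      have happ := IH (s-1) (by omega) {x : α // ¬ x ∈ insert e T}
        (P.subtype fun z => ¬ z ∈ insert e T)
        (by rw [hg, hP']; omega) (by rw [hg, hP']; omega)
      rw [hg, hP'] at happ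
      have hfix : n - 1 - T.card - 1 = n - 2 - T.card := by omega
      rw [hfix] at happ
      exact happ
    -- counts of the two "small e-cycle" parts
    have hBK : Nat.card {c : Cfg α P // CSmall c.1.1 P e}
        = ∑ T ∈ (P.erase e).powerset,
            (if Even T.card then 2 * (T.card ! *
              (((n - 1 - T.card) + (k - 1 - T.card)) * ((n - 2 - T.card))!)) else 0) := by
      rw [card_csmall_sigma P P e heP]
      apply Finset.sum_congr rfl
      intro T hT
      rw [card_XK P T e heP (Finset.mem_powerset.mp hT), hCT T hT]
    have hB : Nat.card {c : Cfg α (P.erase e) // CSmall c.1.1 P e}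
        = ∑ T ∈ (P.erase e).powerset,
            T.card ! * (((n - 1 - T.card) + (k - 1 - T.card)) * ((n - 2 - T.card))!) := by
      rw [card_csmall_sigma (P.erase e) P e heP]
      apply Finset.sum_congr rfl
      intro T hT
      rw [card_XB P T e heP (Finset.mem_powerset.mp hT), hCT T hT]
    -- the erased count via IH
    have hPE : Nat.card (Cfg α (P.erase e)) = (n + (k-1)) * (n - 1)! := by
      have happ := IH (s-1) (by omega) α (P.erase e) (by omega) (by omega)
      rwa [hec] at happ
    -- escape parts agree
    have hesc : Nat.card {c : Cfg α P // ¬ CSmall c.1.1 P e}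
        = Nat.card {c : Cfg α (P.erase e) // ¬ CSmall c.1.1 P e} :=
      Nat.card_congr (escapeEquiv P e)
    have hnat : Nat.card (Cfg α P) + Nat.card {c : Cfg α (P.erase e) // CSmall c.1.1 P e}
        = Nat.card (Cfg α (P.erase e)) + Nat.card {c : Cfg α P // CSmall c.1.1 P e} := by
      rw [card_split P e, card_split' P e, hesc]
      ring
    -- now pass to ℤ
    have hz : (Nat.card (Cfg α P) : ℤ)
        = (n + (k-1) : ℕ) * ((n-1)! : ℕ)
          + ∑ T ∈ (P.erase e).powerset, (-1:ℤ)^T.card * T.card !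
              * ((((n - 1 - T.card) + (k - 1 - T.card)) * ((n - 2 - T.card))! : ℕ)) := by
      have hcast := congrArg (fun m : ℕ => (m : ℤ)) hnat
      push_cast at hcast
      rw [hB, hPE, hBK] at hcast
      push_cast at hcast
      have hterm : ∀ T ∈ (P.erase e).powerset,
          (-1:ℤ)^T.card * T.card !
              * ((((n - 1 - T.card) + (k - 1 - T.card)) * ((n - 2 - T.card))! : ℕ))
          = ((if Even T.card then (2:ℤ) * (T.card ! *
              ((((n - 1 - T.card) + (k - 1 - T.card)) * ((n - 2 - T.card))! : ℕ))) else 0)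
            - T.card ! * ((((n - 1 - T.card) + (k - 1 - T.card)) * ((n - 2 - T.card))! : ℕ))) := by
        intro T _
        rcases Nat.even_or_odd T.card with hpar | hpar
        · rw [if_pos hpar, Even.neg_one_pow hpar]
          ring
        · rw [if_neg (Nat.not_even_iff_odd.mpr hpar), Odd.neg_one_pow hpar]
          ring
      rw [Finset.sum_congr rfl hterm, Finset.sum_sub_distrib]
      push_cast
      linarith [hcast]
    -- group the sum by cardinality
    have hgroup : ∑ T ∈ (P.erase e).powerset, (-1:ℤ)^T.card * T.card !
              * ((((n - 1 - T.card) + (k - 1 - T.card)) * ((n - 2 - T.card))! : ℕ))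
        = ∑ j ∈ Finset.range ((k-1)+1), (-1:ℤ)^j * ((k-1).choose j) * (j)!
              * ((((n-1-j) + ((k-1)-j)) * ((n-2-j))!) : ℕ) := by
      rw [Finset.powerset_card_disjiUnion]
      erw [Finset.sum_disjiUnion]
      rw [hec]
      apply Finset.sum_congr rfl
      intro j hj
      have hconst : ∀ T ∈ Finset.powersetCard j (P.erase e),
          (-1:ℤ)^T.card * T.card !
              * ((((n - 1 - T.card) + (k - 1 - T.card)) * ((n - 2 - T.card))! : ℕ))
          = (-1:ℤ)^j * (j)! * ((((n-1-j) + ((k-1)-j)) * ((n-2-j))!) : ℕ) := by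
        intro T hT
        have hTc : T.card = j := (Finset.mem_powersetCard.mp hT).2
        rw [hTc]
      rw [Finset.sum_congr rfl hconst, Finset.sum_const, Finset.card_powersetCard, hec]
      rw [nsmul_eq_mul]
      push_cast
      ring
    rw [hgroup] at hz
    have hkey := keyid (k-1) n (by omega)
    rw [hkey] at hz
    -- final arithmetic
    have hfin : ((n + (k-1) : ℕ) : ℤ) * ((n-1)! : ℕ) + ((n-1)! : ℕ)
        = ((n + k) * (n-1)! : ℕ) := by
      push_cast
      have : ((k-1:ℕ) : ℤ) = (k:ℤ) - 1 := by omega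
      rw [this]
      ring
    rw [hfin] at hz
    exact_mod_cast hz




/-- permutations fixing a point, as perms of the complement -/
def fixEquiv {α : Type} [Fintype α] [DecidableEq α] (i : α) :
    {σ : Perm α // σ i = i} ≃ Perm {x : α // x ≠ i} where
  toFun σ := σ.1.subtypePerm (fun x => by
    constructor
    · intro hx hc
      rw [hc, σ.2] at hx; exact hx rfl
    · intro hx hc
      exact hx (σ.1.injective (by rw [hc, σ.2])))
  invFun ρ := ⟨Equiv.Perm.ofSubtype ρ, Equiv.Perm.ofSubtype_apply_of_not_mem ρ (by simp)⟩
  left_inv σ := Subtype.ext (Equiv.Perm.ofSubtype_subtypePerm _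
    (fun x hx hc => by subst hc; exact hx σ.2))
  right_inv ρ := by
    ext x
    simp [Equiv.Perm.subtypePerm_apply, Equiv.Perm.ofSubtype_apply_of_mem _ x.2]

def smallEquiv (n k : ℕ) (hk : k ≤ n) : {i : Fin n // (i : ℕ) < k} ≃ Fin k where
  toFun x := ⟨x.1, x.2⟩
  invFun j := ⟨⟨j.1, lt_of_lt_of_le j.2 hk⟩, j.2⟩
  left_inv x := rfl
  right_inv j := rfl

def markedEquiv (d k : ℕ) : Marked d k ≃
    (Perm (Fin (d+1))) ⊕ (Σ i : {i : Fin (d+1) // (i : ℕ) < k}, {σ : Perm (Fin (d+1)) // σ i.1 = i.1}) where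
  toFun m := match h : m.1.2 with
    | none => Sum.inl m.1.1
    | some i => Sum.inr ⟨⟨i, (m.2 i h).2⟩, ⟨m.1.1, (m.2 i h).1⟩⟩
  invFun s := match s with
    | Sum.inl σ => ⟨(σ, none), by intro j hj; cases hj⟩
    | Sum.inr ⟨i, σ⟩ => ⟨(σ.1, some i.1), by
        intro j hj
        cases Option.some.inj hj
        exact ⟨σ.2, i.2⟩⟩
  left_inv m := by
    obtain ⟨⟨σ, o⟩, hm⟩ := m
    cases o <;> rfl
  right_inv s := by
    rcases s with σ | ⟨i, σ⟩ <;> rfl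

lemma card_marked (d k : ℕ) (hk : k ≤ d + 1) :
    Nat.card (Marked d k) = (d+1)! + k * (d)! := by
  rw [Nat.card_congr (markedEquiv d k)]
  rw [Nat.card_eq_fintype_card, Fintype.card_sum, Fintype.card_sigma]
  have h1 : ∀ i : {i : Fin (d+1) // (i : ℕ) < k},
      Fintype.card {σ : Perm (Fin (d+1)) // σ i.1 = i.1} = (d)! := by
    intro i
    rw [Fintype.card_congr (fixEquiv i.1), Fintype.card_perm]
    congr 1
    have h0 := Fintype.card_congr (Equiv.optionSubtypeNe i.1)
    rw [Fintype.card_option, Fintype.card_fin] at h0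
    omega
  rw [Finset.sum_congr rfl (fun i _ => h1 i), Finset.sum_const, Fintype.card_perm, Fintype.card_fin]
  have h2 : Fintype.card {i : Fin (d+1) // (i:ℕ) < k} = k := by
    rw [Fintype.card_congr (smallEquiv (d+1) k hk), Fintype.card_fin]
  rw [Finset.card_univ, h2, smul_eq_mul]

set_option maxHeartbeats 1000000 in
def cfullEquiv (d k : ℕ) :
    CFull d k ≃ Cfg (Fin (d+1)) (Finset.univ.filter fun x : Fin (d+1) => (x:ℕ) < k) :=
  Equiv.subtypeEquivRight fun p => by
    unfold IsKCycleElt cycleLen CSmall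
    simp only [Finset.mem_filter, Finset.mem_univ, true_and]

lemma card_filter_lt (d k : ℕ) (hk : k ≤ d + 1) :
    (Finset.univ.filter fun x : Fin (d+1) => (x:ℕ) < k).card = k := by
  have h1 : (Finset.univ.filter fun x : Fin (d+1) => (x:ℕ) < k).card
      = Fintype.card {x : Fin (d+1) // (x:ℕ) < k} := (Fintype.card_subtype _).symm
  rw [h1, Fintype.card_congr (smallEquiv (d+1) k hk), Fintype.card_fin]

theorem stmt8 (d k : ℕ) (hd : 1 ≤ d) (hk : k ≤ d) :
    Nat.card (CFull d k) = Nat.card (Marked d k) ∧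
      Nat.card (CFull d k) = (d + k + 1) * d ! := by
  have hfc : (Finset.univ.filter fun x : Fin (d+1) => (x:ℕ) < k).card = k :=
    card_filter_lt d k (by omega)
  have hC : Nat.card (CFull d k) = (d + k + 1) * d ! := by
    rw [Nat.card_congr (cfullEquiv d k)]
    have hmain := cfg_card_main ((d+1)+k) (Fin (d+1))
      (Finset.univ.filter fun x : Fin (d+1) => (x:ℕ) < k)
      (by rw [Fintype.card_fin, hfc]) (by rw [Fintype.card_fin, hfc]; omega)
    rw [Fintype.card_fin, hfc] at hmain
    rw [hmain]
    congr 1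
    omega
  have hM : Nat.card (Marked d k) = (d + k + 1) * d ! := by
    rw [card_marked d k (by omega), Nat.factorial_succ]
    ring
  exact ⟨hC.trans hM.symm, hC⟩
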